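/- The set of PM-simulable measurements equals the convex hull of projective measurements: a POVM obtained by applying classical post-processing to a convex combination of projective measurements is itself a convex combination of projective measurements (with outcomes possibly relabelled/coarse-grained), i.e. SP(d,n) = conv(PP(d,n)). -/

import Mathlib

open scoped ComplexOrder

/-- An `n`-outcome POVM on `ℂ^d`. -/
def IsPOVM {d n : ℕ} (M : Fin n → Matrix (Fin d) (Fin d) ℂ) : Prop :=
  (∀ i, (M i).PosSemidef) ∧ ∑ i, M i = 1

/-- A projective measurement: a POVM whose effects are orthogonal projections. -/
def IsProjectivePOVM {d n : ℕ} (M : Fin n → Matrix (Fin d) (Fin d) ℂ) : Prop :=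
  IsPOVM M ∧ ∀ i, (M i).IsHermitian ∧ M i * M i = M i

/-- The set `SP(d,n)` of PM-simulable measurements: POVMs obtained by classical
post-processing (a stochastic matrix `q`) of a convex mixture of projective
measurements. -/
def SP (d n : ℕ) : Set (Fin n → Matrix (Fin d) (Fin d) ℂ) :=
  {M | ∃ (K : ℕ) (P : Fin K → (Fin n → Matrix (Fin d) (Fin d) ℂ))
      (p : Fin K → ℝ) (q : Fin n → Fin n → ℝ),
    (∀ k, IsProjectivePOVM (P k)) ∧
    (∀ k, 0 ≤ p k) ∧ (∑ k, p k) = 1 ∧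
    (∀ i j, 0 ≤ q i j) ∧ (∀ j, ∑ i, q i j = 1) ∧
    ∀ i, M i = ∑ j, (q i j : ℂ) • (∑ k, (p k : ℂ) • P k j)}

section Aux

open Matrix

variable {d n : ℕ}

private lemma real_smul_mat (r : ℝ) (A : Matrix (Fin d) (Fin d) ℂ) : r • A = (r : ℂ) • A := by
  ext i j
  simp [Matrix.smul_apply, Complex.real_smul]

private lemma psd_sum_zero {ι : Type*} (s : Finset ι) (T : ι → Matrix (Fin d) (Fin d) ℂ)
    (h : ∀ l ∈ s, (T l).PosSemidef) (hsum : ∑ l ∈ s, T l = 0) :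
    ∀ l ∈ s, T l = 0 := by
  intro l hl
  have hx : ∀ x : Fin d → ℂ, dotProduct (star x) (T l *ᵥ x) = 0 := by
    intro x
    have h0 : ∑ m ∈ s, dotProduct (star x) (T m *ᵥ x) = 0 := by
      have hlin : ∑ m ∈ s, dotProduct (star x) (T m *ᵥ x)
          = dotProduct (star x) ((∑ m ∈ s, T m) *ᵥ x) := by
        simp only [Matrix.mulVec, dotProduct, Finset.sum_apply, Matrix.sum_apply,
          Finset.sum_mul, Finset.mul_sum]
        rw [Finset.sum_comm]
        exact Finset.sum_congr rfl fun i _ => Finset.sum_comm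
      rw [hlin, hsum]
      simp
    exact (Finset.sum_eq_zero_iff_of_nonneg (fun m hm => (h m hm).dotProduct_mulVec_nonneg x)).mp h0 l hl
  have hBx : ∀ x : Fin d → ℂ, T l *ᵥ x = 0 := fun x =>
    ((h l hl).dotProduct_mulVec_zero_iff x).mp (hx x)
  ext i j
  have := congrFun (hBx (Pi.single j 1)) i
  simpa [Matrix.mulVec_single] using this

private lemma proj_orth {P : Fin n → Matrix (Fin d) (Fin d) ℂ} (hP : IsProjectivePOVM P)
    {i j : Fin n} (hij : i ≠ j) : P i * P j = 0 := by
  suffices h : ∀ i j : Fin n, i ≠ j → P j * P i = 0 by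
    exact h j i hij.symm
  intro i j hij
  have herm : ∀ l, (P l)ᴴ = P l := fun l => (hP.2 l).1
  have hidem : ∀ l, P l * P l = P l := fun l => (hP.2 l).2
  have hpsd : ∀ l, P i * P l * P i = (P l * P i)ᴴ * (P l * P i) := by
    intro l
    have h' : (P l * P i)ᴴ * (P l * P i) = P i * (P l * P l) * P i := by
      rw [Matrix.conjTranspose_mul, herm, herm]; noncomm_ring
    rw [h', hidem]
  have h1 : ∑ l, P i * P l * P i = P i := by
    rw [← Finset.sum_mul, ← Finset.mul_sum, hP.1.2, mul_one, hidem]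
  have h2 : ∑ l ∈ Finset.univ.erase i, P i * P l * P i = 0 := by
    have := Finset.add_sum_erase Finset.univ (fun l => P i * P l * P i) (Finset.mem_univ i)
    rw [h1] at this
    have hii : P i * P i * P i = P i := by rw [hidem, hidem]
    simp only [hii] at this
    rwa [add_eq_left] at this
  have h3 := psd_sum_zero (Finset.univ.erase i) (fun l => P i * P l * P i)
    (fun l _ => by
      simpa only [hpsd] using Matrix.posSemidef_conjTranspose_mul_self (P l * P i))
    h2 j (Finset.mem_erase.mpr ⟨hij.symm, Finset.mem_univ j⟩)
  have h4 : (P j * P i)ᴴ * (P j * P i) = 0 := by rw [← hpsd]; exact h3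
  exact Matrix.conjTranspose_mul_self_eq_zero.mp h4

private lemma proj_pushforward {P : Fin n → Matrix (Fin d) (Fin d) ℂ} (hP : IsProjectivePOVM P)
    (f : Fin n → Fin n) :
    IsProjectivePOVM (fun i => ∑ j ∈ Finset.univ.filter (fun j => f j = i), P j) := by
  have herm : ∀ i, (∑ j ∈ Finset.univ.filter (fun j => f j = i), P j).IsHermitian := by
    intro i
    show (∑ j ∈ Finset.univ.filter (fun j => f j = i), P j)ᴴ = _
    rw [Matrix.conjTranspose_sum]
    exact Finset.sum_congr rfl fun j _ => (hP.2 j).1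
  have hidem : ∀ i, (∑ j ∈ Finset.univ.filter (fun j => f j = i), P j) *
      (∑ j ∈ Finset.univ.filter (fun j => f j = i), P j) =
      ∑ j ∈ Finset.univ.filter (fun j => f j = i), P j := by
    intro i
    rw [Finset.sum_mul]
    refine Finset.sum_congr rfl fun j hj => ?_
    rw [Finset.mul_sum]
    rw [Finset.sum_eq_single j (fun l hl hlj => proj_orth hP (Ne.symm hlj))
      (fun hj' => absurd hj hj')]
    exact (hP.2 j).2
  refine ⟨⟨fun i => ?_, ?_⟩, fun i => ⟨herm i, hidem i⟩⟩
  · have := Matrix.posSemidef_conjTranspose_mul_self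
      (∑ j ∈ Finset.univ.filter (fun j => f j = i), P j)
    rwa [herm i, hidem i] at this
  · rw [Finset.sum_fiberwise]
    exact hP.1.2

end Aux

theorem SP_eq_convexHull_projective (d n : ℕ) :
    SP d n =
      convexHull ℝ {P : Fin n → Matrix (Fin d) (Fin d) ℂ | IsProjectivePOVM P} := by
  set S := {P : Fin n → Matrix (Fin d) (Fin d) ℂ | IsProjectivePOVM P} with hS
  apply Set.Subset.antisymm
  · -- SP ⊆ conv(PP)
    rintro M ⟨K, P, p, q, hP, hp0, hp1, hq0, hq1, hM⟩
    set c : (Fin n → Fin n) → ℝ := fun f => ∏ j, q (f j) j with hc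
    have hc0 : ∀ f, 0 ≤ c f := fun f => Finset.prod_nonneg fun j _ => hq0 _ _
    have hcsum : ∑ f : Fin n → Fin n, c f = 1 := by
      calc ∑ f : Fin n → Fin n, ∏ j, q (f j) j = ∏ j, ∑ m, q m j :=
            (Fintype.prod_sum (fun j m => q m j)).symm
        _ = 1 := by simp [hq1]
    have hqc : ∀ i j, ∑ f : Fin n → Fin n, (if f j = i then c f else 0) = q i j := by
      intro i j
      have step1 : ∀ f : Fin n → Fin n, (if f j = i then c f else 0)
          = ∏ j', (if j' = j then (if f j' = i then q (f j') j' else 0)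
              else q (f j') j') := by
        intro f
        by_cases h : f j = i
        · rw [if_pos h]
          refine Finset.prod_congr rfl fun j' _ => ?_
          by_cases hj' : j' = j
          · subst hj'; simp [h]
          · simp [hj']
        · rw [if_neg h]
          symm
          apply Finset.prod_eq_zero (Finset.mem_univ j)
          simp [h]
      rw [Finset.sum_congr rfl fun f _ => step1 f,
        ← Fintype.prod_sum (fun j' m => if j' = j then (if m = i then q m j' else 0)
            else q m j')]
      calc ∏ j', ∑ m, (if j' = j then (if m = i then q m j' else 0) else q m j')
          = ∏ j', (if j' = j then q i j else 1) := by
            refine Finset.prod_congr rfl fun j' _ => ?_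
            by_cases hj' : j' = j
            · subst hj'; simp
            · simp [hj', hq1 j']
        _ = q i j := by simp
    let w : (Fin n → Fin n) × Fin K → ℝ := fun x => c x.1 * p x.2
    let z : (Fin n → Fin n) × Fin K → (Fin n → Matrix (Fin d) (Fin d) ℂ) :=
      fun x i => ∑ j ∈ Finset.univ.filter (fun j => x.1 j = i), P x.2 j
    have hz : ∀ x, z x ∈ S := fun x => proj_pushforward (hP x.2) x.1
    have hw0 : ∀ x, 0 ≤ w x := fun x => mul_nonneg (hc0 x.1) (hp0 x.2)
    have hw1 : ∑ x : (Fin n → Fin n) × Fin K, w x = 1 := by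
      calc ∑ x : (Fin n → Fin n) × Fin K, w x = ∑ f : Fin n → Fin n, ∑ k, c f * p k :=
            Fintype.sum_prod_type _
        _ = ∑ f : Fin n → Fin n, c f := by
            refine Finset.sum_congr rfl fun f _ => ?_
            rw [← Finset.mul_sum, hp1, mul_one]
        _ = 1 := hcsum
    have hMz : M = ∑ x : (Fin n → Fin n) × Fin K, w x • z x := by
      funext i
      have hsum_app : (∑ x : (Fin n → Fin n) × Fin K, w x • z x) i
          = ∑ f : Fin n → Fin n, ∑ k, ((c f : ℂ) * (p k : ℂ)) •
              (∑ j ∈ Finset.univ.filter (fun j => f j = i), P k j) := by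
        rw [Finset.sum_apply, Fintype.sum_prod_type]
        refine Finset.sum_congr rfl fun f _ => Finset.sum_congr rfl fun k _ => ?_
        rw [Pi.smul_apply]
        show (c f * p k) • (∑ j ∈ Finset.univ.filter (fun j => f j = i), P k j) = _
        rw [real_smul_mat]
        push_cast
        rfl
      set N : Fin n → Matrix (Fin d) (Fin d) ℂ := fun j => ∑ k, (p k : ℂ) • P k j with hN
      have inner : ∀ f : Fin n → Fin n,
          ∑ k, ((c f : ℂ) * (p k : ℂ)) •
              (∑ j ∈ Finset.univ.filter (fun j => f j = i), P k j)
          = ∑ j, (if f j = i then (c f : ℂ) else 0) • N j := by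
        intro f
        calc ∑ k, ((c f : ℂ) * (p k : ℂ)) •
                (∑ j ∈ Finset.univ.filter (fun j => f j = i), P k j)
            = ∑ k, ∑ j, (if f j = i then ((c f : ℂ) * (p k : ℂ)) • P k j else 0) := by
              refine Finset.sum_congr rfl fun k _ => ?_
              rw [Finset.sum_filter, Finset.smul_sum]
              exact Finset.sum_congr rfl fun j _ => by split_ifs <;> simp
          _ = ∑ j, ∑ k, (if f j = i then ((c f : ℂ) * (p k : ℂ)) • P k j else 0) :=
              Finset.sum_comm
          _ = ∑ j, (if f j = i then (c f : ℂ) else 0) • N j := by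
              refine Finset.sum_congr rfl fun j _ => ?_
              split_ifs with h
              · simp only [hN, Finset.smul_sum]
                exact Finset.sum_congr rfl fun k _ => (mul_smul _ _ _)
              · simp
      calc M i = ∑ j, (q i j : ℂ) • N j := hM i
        _ = ∑ j, (∑ f : Fin n → Fin n, (if f j = i then (c f : ℂ) else 0)) • N j := by
            refine Finset.sum_congr rfl fun j _ => ?_
            congr 1
            have := hqc i j
            push_cast [← this]
            simp [apply_ite (fun r : ℝ => (r : ℂ))]
        _ = ∑ j, ∑ f : Fin n → Fin n, (if f j = i then (c f : ℂ) else 0) • N j := by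
            refine Finset.sum_congr rfl fun j _ => ?_
            rw [Finset.sum_smul]
        _ = ∑ f : Fin n → Fin n, ∑ j, (if f j = i then (c f : ℂ) else 0) • N j :=
            Finset.sum_comm
        _ = ∑ f : Fin n → Fin n, ∑ k, ((c f : ℂ) * (p k : ℂ)) •
              (∑ j ∈ Finset.univ.filter (fun j => f j = i), P k j) := by
            exact Finset.sum_congr rfl fun f _ => (inner f).symm
        _ = (∑ x : (Fin n → Fin n) × Fin K, w x • z x) i := hsum_app.symm
    rw [hMz]
    exact Convex.sum_mem (convex_convexHull ℝ S) (fun x _ => hw0 x) hw1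
      (fun x _ => subset_convexHull ℝ S (hz x))
  · -- conv(PP) ⊆ SP
    rw [convexHull_eq]
    rintro M ⟨ι, t, w, zf, hw0, hw1, hz, hcm⟩
    rw [Finset.centerMass_eq_of_sum_1 _ _ hw1] at hcm
    set e := t.equivFin with he
    refine ⟨t.card, fun k => zf ((e.symm k : t) : ι), fun k => w ((e.symm k : t) : ι),
      fun i j => if i = j then 1 else 0, fun k => hz _ (e.symm k).2,
      fun k => hw0 _ (e.symm k).2, ?_, ?_, ?_, ?_⟩
    · calc ∑ k : Fin t.card, w ((e.symm k : t) : ι) = ∑ a : t, w a :=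
            Equiv.sum_comp e.symm (fun a : t => w (a : ι))
        _ = ∑ a ∈ t, w a := Finset.sum_coe_sort t w
        _ = 1 := hw1
    · intro i j; dsimp only; split_ifs <;> norm_num
    · intro j; simp
    · intro i
      have key : ∑ k : Fin t.card, (w ((e.symm k : t) : ι) : ℂ) • zf ((e.symm k : t) : ι) i
          = ∑ a ∈ t, (w a : ℂ) • zf a i := by
        calc ∑ k : Fin t.card, (w ((e.symm k : t) : ι) : ℂ) • zf ((e.symm k : t) : ι) i
            = ∑ a : t, (w (a : ι) : ℂ) • zf (a : ι) i :=
              Equiv.sum_comp e.symm (fun a : t => (w (a : ι) : ℂ) • zf (a : ι) i)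
          _ = ∑ a ∈ t, (w a : ℂ) • zf a i :=
              Finset.sum_coe_sort t (fun a => (w a : ℂ) • zf a i)
      have hMi : M i = ∑ a ∈ t, (w a : ℂ) • zf a i := by
        rw [← hcm, Finset.sum_apply]
        exact Finset.sum_congr rfl fun a _ => by rw [Pi.smul_apply, real_smul_mat]
      rw [hMi, ← key]
      simp [apply_ite (fun r : ℝ => (r : ℂ)), ite_smul, zero_smul, one_smul,
        Finset.sum_ite_eq]
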